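/- Let R be a Noetherian UFD (e.g. the group ring ℤ[G] of a finitely generated free abelian group G) with fraction field Q. Let H be a finitely generated R-module admitting a presentation ⟨γ₁,…,γ_{g+r} | ρ₁,…,ρ_r⟩ of deficiency g, and let 𝒜 : Λ^g H → R be the associated Alexander function defined by 𝒜(u₁∧…∧u_g) · γ₁∧…∧γ_{g+r} = ρ₁∧…∧ρ_r∧ũ₁∧…∧ũ_g in Λ^{g+r}Γ, where Γ is the free R-module on γ₁,…,γ_{g+r} and ũᵢ are arbitrary lifts of uᵢ. Suppose dim_Q(Q ⊗_R H) = g, and suppose w₁,…,w_g ∈ H generate Q ⊗_R H over Q. Then for all y₁,…,y_g ∈ H: 𝒜(y₁∧…∧y_g) = ord(H/⟨w₁,…,w_g⟩) · det(M) up to multiplication by a unit, where M is the matrix expressing the images of y₁,…,y_g in Q ⊗_R H in the basis given by w₁,…,w_g, and ord denotes the order (first elementary ideal generator) of the finitely generated torsion R-module H/⟨w₁,…,w_g⟩. -/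

import Mathlib

open TensorProduct

/-- `Δ` is an order of the finitely generated `R`-module `N`: for some (square-free style)
finite presentation of `N` with `m` generators and relation vectors `P`, `Δ` is a gcd of
the `m × m` minors of the presentation matrix. -/
def IsOrderOf (R : Type) [CommRing R] (N : Type) [AddCommGroup N] [Module R N]
    (Δ : R) : Prop :=
  ∃ (m k : ℕ) (q : (Fin m → R) →ₗ[R] N) (P : Fin k → (Fin m → R)),
    Function.Surjective q ∧
    LinearMap.ker q = Submodule.span R (Set.range P) ∧
    (∀ c : R, (∃ s : Fin m → Fin k, c = Matrix.det (Matrix.of fun i j => P (s i) j)) →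
      Δ ∣ c) ∧
    (∀ e : R,
      (∀ c : R, (∃ s : Fin m → Fin k, c = Matrix.det (Matrix.of fun i j => P (s i) j)) →
        e ∣ c) → e ∣ Δ)

section AuxiliaryLemmas


variable {R : Type*} [CommRing R] {N : Type*} [AddCommGroup N] [Module R N]

def DvdKerDet {ι : Type*} [Fintype ι] [DecidableEq ι] (q : (ι → R) →ₗ[R] N) (e : R) : Prop :=
  ∀ T : Matrix ι ι R, (∀ i, q (T i) = 0) → e ∣ T.det

lemma dvdKerDet_comp {κ ι : Type*} [Fintype ι] [DecidableEq ι] [Fintype κ] [DecidableEq κ]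
    (σ : κ ≃ ι) (q : (ι → R) →ₗ[R] N) (q' : (κ → R) →ₗ[R] N)
    (hq : ∀ u : κ → R, q' u = q (u ∘ σ.symm)) {e : R} (h : DvdKerDet q e) :
    DvdKerDet q' e := by
  intro T hT
  have h2 : e ∣ (T.submatrix σ.symm σ.symm).det := by
    refine h _ (fun i => ?_)
    have h3 := hT (σ.symm i)
    rw [hq] at h3
    exact h3
  rwa [Matrix.det_submatrix_equiv_self] at h2

lemma dvdKerDet_snoc_iff {m : ℕ} (q : (Fin m → R) →ₗ[R] N) (v : Fin m → R)
    (q' : (Fin (m + 1) → R) →ₗ[R] N)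
    (hq' : ∀ u, q' u = q (fun i => u i.castSucc + u (Fin.last m) * v i)) (e : R) :
    DvdKerDet q' e ↔ DvdKerDet q e := by
  constructor
  · intro h T hT
    set T' : Matrix (Fin (m + 1)) (Fin (m + 1)) R :=
      Matrix.of (Fin.snoc (fun i => Fin.snoc (T i) 0) (Fin.snoc v (-1))) with hT'def
    have hrow_cast : ∀ i : Fin m, T' i.castSucc = Fin.snoc (T i) 0 := by
      intro i; funext j; simp [hT'def]
    have hrow_last : T' (Fin.last m) = Fin.snoc v (-1) := by
      funext j; simp [hT'def]
    have hrows : ∀ i, q' (T' i) = 0 := by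
      intro i
      refine Fin.lastCases ?_ (fun i => ?_) i
      · rw [hq', hrow_last]
        have : (fun i : Fin m => (Fin.snoc v (-1) : Fin (m+1) → R) i.castSucc
            + (Fin.snoc v (-1) : Fin (m+1) → R) (Fin.last m) * v i) = 0 := by
          funext i; simp
        rw [this, map_zero]
      · rw [hq', hrow_cast]
        have : (fun l : Fin m => (Fin.snoc (T i) 0 : Fin (m+1) → R) l.castSucc
            + (Fin.snoc (T i) 0 : Fin (m+1) → R) (Fin.last m) * v l) = T i := by
          funext l; simp
        rw [this]; exact hT i
    have hdet := h T' hrows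
    have hTlast : ∀ i : Fin m, T' i.castSucc (Fin.last m) = 0 := by
      intro i; rw [hrow_cast]; simp
    have hexp : T'.det = - T.det := by
      rw [Matrix.det_succ_column T' (Fin.last m), Fin.sum_univ_castSucc]
      have hz : ∀ i : Fin m, (-1 : R) ^ ((i.castSucc : ℕ) + (Fin.last m : ℕ))
          * T' i.castSucc (Fin.last m)
          * ((T'.submatrix i.castSucc.succAbove (Fin.last m).succAbove).det) = 0 := by
        intro i; rw [hTlast]; ring
      rw [Finset.sum_eq_zero (fun i _ => hz i), zero_add]
      have h1 : T' (Fin.last m) (Fin.last m) = -1 := by rw [hrow_last]; simp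
      have h2 : (T'.submatrix (Fin.last m).succAbove (Fin.last m).succAbove) = T := by
        ext i j
        rw [Fin.succAbove_last, Matrix.submatrix_apply, hrow_cast]
        simp
      rw [h1, h2]
      have h3 : ((Fin.last m : ℕ) + (Fin.last m : ℕ)) = 2 * m := by simp [Fin.val_last]; ring
      rw [h3, pow_mul]
      simp
    rw [hexp] at hdet
    exact (dvd_neg).mp hdet
  · intro h T hT
    -- multiply by elementary matrix E on the right
    set E : Matrix (Fin (m + 1)) (Fin (m + 1)) R :=
      Matrix.of (fun k l => if k = l then 1 else
        if k = Fin.last m then (Fin.lastCases 0 v : ∀ _ : Fin (m+1), R) l else 0) with hEdef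
    have hEtri : E.BlockTriangular OrderDual.toDual := by
      intro i j hij
      have hij' : i < j := hij
      have h1 : i ≠ j := ne_of_lt hij'
      have h2 : i ≠ Fin.last m := by
        intro hcontra; subst hcontra
        exact absurd hij' (not_lt.mpr (Fin.le_last j))
      simp [hEdef, h1, h2]
    have hEdet : E.det = 1 := by
      rw [Matrix.det_of_lowerTriangular E hEtri]
      have : ∀ i, E i i = 1 := by intro i; simp [hEdef]
      simp [this]
    have hTE : ∀ (a : Fin (m+1)) (l : Fin m),
        (T * E) a l.castSucc = T a l.castSucc + T a (Fin.last m) * v l := by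
      intro a l
      rw [Matrix.mul_apply, Fin.sum_univ_castSucc]
      have h1 : ∀ j : Fin m, T a j.castSucc * E j.castSucc l.castSucc
          = if j = l then T a j.castSucc else 0 := by
        intro j
        by_cases hj : j = l
        · subst hj; simp [hEdef]
        · have : j.castSucc ≠ l.castSucc := by
            simpa [Fin.castSucc_inj] using hj
          simp [hEdef, this, hj, (Fin.castSucc_lt_last j).ne]
      rw [Finset.sum_congr rfl (fun j _ => h1 j), Finset.sum_ite_eq' Finset.univ l
        (fun j => T a j.castSucc)]
      have h2 : E (Fin.last m) l.castSucc = v l := by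
        have hne : Fin.last m ≠ l.castSucc := (Fin.castSucc_lt_last l).ne'
        simp [hEdef, hne]
      simp [h2]
    have hTElast : ∀ a : Fin (m+1), (T * E) a (Fin.last m) = T a (Fin.last m) := by
      intro a
      rw [Matrix.mul_apply, Fin.sum_univ_castSucc]
      have h1 : ∀ j : Fin m, T a j.castSucc * E j.castSucc (Fin.last m) = 0 := by
        intro j
        have : j.castSucc ≠ Fin.last m := (Fin.castSucc_lt_last j).ne
        simp [hEdef, this]
      rw [Finset.sum_congr rfl (fun j _ => h1 j)]
      simp [hEdef]
    have hdet2 : T.det = (T * E).det := by rw [Matrix.det_mul, hEdet, mul_one]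
    rw [hdet2, Matrix.det_succ_column (T * E) (Fin.last m)]
    refine Finset.dvd_sum (fun i _ => ?_)
    refine Dvd.dvd.mul_left ?_ _
    refine h _ (fun k => ?_)
    have hrow : ((T * E).submatrix i.succAbove (Fin.last m).succAbove) k
        = fun l => T (i.succAbove k) l.castSucc + T (i.succAbove k) (Fin.last m) * v l := by
      funext l
      rw [Matrix.submatrix_apply, Fin.succAbove_last]
      exact hTE _ l
    rw [hrow, ← hq']
    exact hT _
  

/-- extend a presentation by extra generators `x`. -/
noncomputable def extGen {a : ℕ} (q : (Fin a → R) →ₗ[R] N) {n : ℕ} (x : Fin n → N) :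
    (Fin (a + n) → R) →ₗ[R] N :=
  q ∘ₗ LinearMap.funLeft R R (Fin.castAdd n)
    + ∑ j : Fin n, (LinearMap.proj (Fin.natAdd a j)).smulRight (x j)

lemma extGen_apply {a : ℕ} (q : (Fin a → R) →ₗ[R] N) {n : ℕ} (x : Fin n → N)
    (u : Fin (a + n) → R) :
    extGen q x u = q (fun i => u (Fin.castAdd n i)) + ∑ j : Fin n, u (Fin.natAdd a j) • x j := by
  simp only [extGen, LinearMap.add_apply, LinearMap.coe_comp, Function.comp_apply,
    LinearMap.coe_sum, Finset.sum_apply, LinearMap.coe_smulRight, LinearMap.proj_apply]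
  rfl

lemma dvdKerDet_extGen_iff {a : ℕ} (q : (Fin a → R) →ₗ[R] N) (hq : Function.Surjective q)
    {n : ℕ} (x : Fin n → N) (e : R) :
    DvdKerDet (extGen q x) e ↔ DvdKerDet q e := by
  induction n with
  | zero =>
      have hcoe : extGen q x = q := by
        apply LinearMap.ext
        intro u
        rw [extGen_apply]
        have h1 : (fun i => u (Fin.castAdd 0 i)) = u := by
          funext i; exact congrArg u (Fin.ext rfl)
        rw [h1]
        simp
      rw [hcoe]
  | succ n ih =>
      obtain ⟨u₀, hu₀⟩ := hq (x (Fin.last n))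
      set v : Fin (a + n) → R := Fin.append u₀ (0 : Fin n → R) with hv
      have hstep : ∀ u : Fin (a + (n+1)) → R,
          extGen q x u = extGen q (fun j : Fin n => x j.castSucc)
            (fun i : Fin (a + n) => u i.castSucc + u (Fin.last (a + n)) * v i) := by
        intro u
        rw [extGen_apply, extGen_apply]
        have hqterm : (fun i : Fin a =>
              (u (Fin.castAdd n i).castSucc + u (Fin.last (a+n)) * v (Fin.castAdd n i)))
            = (fun i : Fin a => u (Fin.castAdd (n+1) i)) + u (Fin.last (a+n)) • u₀ := by
          funext i
          have e1 : (Fin.castAdd n i).castSucc = Fin.castAdd (n+1) i := Fin.ext rfl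
          rw [e1, hv, Fin.append_left]
          rfl
        have hrhs : q (fun i : Fin a =>
              (u (Fin.castAdd n i).castSucc + u (Fin.last (a+n)) * v (Fin.castAdd n i)))
            = q (fun i : Fin a => u (Fin.castAdd (n+1) i))
              + u (Fin.last (a+n)) • x (Fin.last n) := by
          rw [hqterm, map_add, map_smul, hu₀]
        have hsum2 : ∀ j : Fin n,
            (u (Fin.natAdd a j).castSucc + u (Fin.last (a+n)) * v (Fin.natAdd a j))
              • x j.castSucc
            = u (Fin.natAdd a j.castSucc) • x j.castSucc := by
          intro j
          have e1 : (Fin.natAdd a j).castSucc = Fin.natAdd a j.castSucc := Fin.ext rfl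
          rw [e1, hv, Fin.append_right]
          simp
        have hsum1 : ∑ j : Fin (n+1), u (Fin.natAdd a j) • x j
            = ∑ j : Fin n, u (Fin.natAdd a j.castSucc) • x j.castSucc
              + u (Fin.last (a+n)) • x (Fin.last n) := by
          rw [Fin.sum_univ_castSucc,
            show Fin.natAdd a (Fin.last n) = Fin.last (a+n) from Fin.ext rfl]
        rw [hrhs, hsum1, Finset.sum_congr rfl (fun j _ => hsum2 j)]
        abel
      have hiff := dvdKerDet_snoc_iff (m := a + n) (extGen q (fun j : Fin n => x j.castSucc)) v
        (extGen q x) hstep e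
      exact hiff.trans (ih (fun j : Fin n => x j.castSucc))

lemma dvdKerDet_iff_of_surjective {a b : ℕ}
    (q1 : (Fin a → R) →ₗ[R] N) (h1 : Function.Surjective q1)
    (q2 : (Fin b → R) →ₗ[R] N) (h2 : Function.Surjective q2) (e : R) :
    DvdKerDet q1 e ↔ DvdKerDet q2 e := by
  set x1 : Fin a → N := fun i => q1 (fun l => if i = l then 1 else 0) with hx1
  set x2 : Fin b → N := fun j => q2 (fun l => if j = l then 1 else 0) with hx2
  set σ : Fin (b + a) ≃ Fin (a + b) :=
    finSumFinEquiv.symm.trans ((Equiv.sumComm (Fin b) (Fin a)).trans finSumFinEquiv) with hσ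
  have hσ1 : ∀ i : Fin a, σ.symm (Fin.castAdd b i) = Fin.natAdd b i := by
    intro i; simp [hσ]
  have hσ2 : ∀ j : Fin b, σ.symm (Fin.natAdd a j) = Fin.castAdd a j := by
    intro j; simp [hσ]
  have hcross : ∀ u : Fin (b + a) → R, extGen q2 x1 u = extGen q1 x2 (u ∘ σ.symm) := by
    intro u
    rw [extGen_apply, extGen_apply]
    have e1 : q2 (fun j => u (Fin.castAdd a j)) = ∑ j : Fin b, u (Fin.castAdd a j) • x2 j := by
      rw [LinearMap.pi_apply_eq_sum_univ q2 (fun j => u (Fin.castAdd a j))]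
    have e2 : q1 (fun i => (u ∘ σ.symm) (Fin.castAdd b i))
        = ∑ i : Fin a, u (Fin.natAdd b i) • x1 i := by
      have : (fun i => (u ∘ σ.symm) (Fin.castAdd b i)) = fun i => u (Fin.natAdd b i) := by
        funext i; simp [Function.comp, hσ1]
      rw [this, LinearMap.pi_apply_eq_sum_univ q1 (fun i => u (Fin.natAdd b i))]
    have e3 : ∀ j : Fin b, (u ∘ σ.symm) (Fin.natAdd a j) = u (Fin.castAdd a j) := by
      intro j; simp [Function.comp, hσ2]
    have e4 : ∑ j : Fin b, (u ∘ σ.symm) (Fin.natAdd a j) • x2 j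
        = ∑ j : Fin b, u (Fin.castAdd a j) • x2 j :=
      Finset.sum_congr rfl (fun j _ => by rw [e3 j])
    rw [e1, e2, e4]
    exact add_comm _ _
  have hcross2 : ∀ u : Fin (a + b) → R, extGen q1 x2 u = extGen q2 x1 (u ∘ σ) := by
    intro u
    rw [hcross (u ∘ σ)]
    congr 1
    funext l; simp
  have hAB : DvdKerDet (extGen q1 x2) e ↔ DvdKerDet (extGen q2 x1) e := by
    constructor
    · exact fun h => dvdKerDet_comp σ _ _ hcross h
    · intro h
      refine dvdKerDet_comp σ.symm _ _ ?_ h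
      intro u; rw [hcross2]; simp
  exact (dvdKerDet_extGen_iff q1 h1 x2 e).symm.trans
    (hAB.trans (dvdKerDet_extGen_iff q2 h2 x1 e))

lemma dvdKerDet_of_span {m k : ℕ} (q : (Fin m → R) →ₗ[R] N) (P : Fin k → (Fin m → R))
    (hker : LinearMap.ker q = Submodule.span R (Set.range P)) {Δ : R}
    (hdvd : ∀ s : Fin m → Fin k, Δ ∣ (Matrix.of fun i j => P (s i) j).det) :
    DvdKerDet q Δ := by
  intro T hT
  have hmem : ∀ i, ∃ c : Fin k → R, ∑ t, c t • P t = T i := by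
    intro i
    have : T i ∈ LinearMap.ker q := hT i
    rw [hker] at this
    exact (Submodule.mem_span_range_iff_exists_fun R).mp this
  choose c hc using hmem
  have hTc : T = fun i => ∑ t, c i t • P t := by
    funext i; exact (hc i).symm
  have hdet : T.det = ∑ s : Fin m → Fin k,
      (∏ i, c i (s i)) • (Matrix.of fun i j => P (s i) j).det := by
    have h1 : T.det = Matrix.detRowAlternating T := rfl
    rw [h1]
    conv_lhs => rw [hTc]
    rw [show ((Matrix.detRowAlternating : (Fin m → R) [⋀^Fin m]→ₗ[R] R)
        (fun i => ∑ t, c i t • P t))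
      = (Matrix.detRowAlternating : (Fin m → R) [⋀^Fin m]→ₗ[R] R).toMultilinearMap
        (fun i => ∑ t : Fin k, c i t • P t) from rfl]
    rw [MultilinearMap.map_sum]
    refine Finset.sum_congr rfl (fun s _ => ?_)
    rw [MultilinearMap.map_smul_univ]
    rfl
  rw [hdet]
  refine Finset.dvd_sum (fun s _ => ?_)
  rw [smul_eq_mul]
  exact Dvd.dvd.mul_left (hdvd s) _

noncomputable def detFam (n : ℕ) : ∀ i : ℕ, (Fin n → R) [⋀^Fin i]→ₗ[R] R :=
  fun i => if h : i = n then
    (Matrix.detRowAlternating : (Fin n → R) [⋀^Fin n]→ₗ[R] R).domDomCongr (finCongr h).symm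
  else 0

lemma phi_ofFn {n m : ℕ} (hm : m = n) (v : Fin m → (Fin n → R)) :
    ExteriorAlgebra.liftAlternating (detFam n)
      ((List.ofFn fun i => ExteriorAlgebra.ι R (v i)).prod)
      = (Matrix.of fun i j => v (finCongr hm.symm i) j).det := by
  rw [← ExteriorAlgebra.ιMulti_apply, ExteriorAlgebra.liftAlternating_apply_ιMulti]
  rw [show detFam (R := R) n m
      = (Matrix.detRowAlternating : (Fin n → R) [⋀^Fin n]→ₗ[R] R).domDomCongr
        (finCongr hm).symm from dif_pos hm]
  simp only [AlternatingMap.domDomCongr_apply]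
  rfl

end AuxiliaryLemmas

open TensorProduct in
theorem stmt14' (R : Type) [CommRing R] [IsDomain R] [IsNoetherianRing R]
    [UniqueFactorizationMonoid R]
    (Q : Type) [Field Q] [Algebra R Q] [IsFractionRing R Q]
    (H : Type) [AddCommGroup H] [Module R H] [Module.Finite R H]
    (g r : ℕ)
    (pr : (Fin (g + r) → R) →ₗ[R] H) (hpr : Function.Surjective pr)
    (rel : Fin r → (Fin (g + r) → R))
    (hker : LinearMap.ker pr = Submodule.span R (Set.range rel))
    (Alex : (Fin g → H) → R)
    (hAlex : ∀ (u : Fin g → H) (lift : Fin g → (Fin (g + r) → R)),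
      (∀ i, pr (lift i) = u i) →
      (List.ofFn fun i => ExteriorAlgebra.ι R (rel i)).prod *
          (List.ofFn fun i => ExteriorAlgebra.ι R (lift i)).prod =
        Alex u • (List.ofFn fun i : Fin (g + r) =>
          ExteriorAlgebra.ι R (Pi.single i (1 : R))).prod)
    (hdim : Module.finrank Q (Q ⊗[R] H) = g)
    (w : Fin g → H)
    (hw : Submodule.span Q (Set.range fun i => (1 : Q) ⊗ₜ[R] w i) = ⊤)
    (Δ : R) (hΔ : ∃ (m k : ℕ) (q : (Fin m → R) →ₗ[R] (H ⧸ Submodule.span R (Set.range w)))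
      (P : Fin k → (Fin m → R)),
      Function.Surjective q ∧
      LinearMap.ker q = Submodule.span R (Set.range P) ∧
      (∀ c : R, (∃ s : Fin m → Fin k, c = Matrix.det (Matrix.of fun i j => P (s i) j)) →
        Δ ∣ c) ∧
      (∀ e : R,
        (∀ c : R, (∃ s : Fin m → Fin k, c = Matrix.det (Matrix.of fun i j => P (s i) j)) →
          e ∣ c) → e ∣ Δ)) :
    ∃ u : Rˣ, ∀ (y : Fin g → H) (M : Matrix (Fin g) (Fin g) Q),
      (∀ i, (1 : Q) ⊗ₜ[R] y i = ∑ j, M i j • ((1 : Q) ⊗ₜ[R] w j)) →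
      algebraMap R Q (Alex y) = algebraMap R Q ((u : R) * Δ) * M.det := by
  classical
  have hnrg : g + r = r + g := Nat.add_comm g r
  -- global choice of lifts along `pr`
  choose lift hlift using hpr
  set ℓw : Fin g → (Fin (g + r) → R) := fun i => lift (w i) with hℓw
  -- the stacked matrix of a choice of last `g` rows
  set Stk : (Fin g → (Fin (g + r) → R)) → Matrix (Fin (g + r)) (Fin (g + r)) R :=
    fun x => Matrix.of fun i j => Fin.append rel x (finCongr hnrg i) j with hStk
  -- bridge : Alex u is the determinant of the stacked matrix, for any lift
  have key : ∀ (u : Fin g → H) (lf : Fin g → (Fin (g + r) → R)), (∀ i, pr (lf i) = u i) →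
      Alex u = (Stk lf).det := by
    intro u lf hlf
    have h0 := hAlex u lf hlf
    have h1 := congrArg (ExteriorAlgebra.liftAlternating (detFam (g + r))) h0
    rw [map_smul] at h1
    have h2 : (List.ofFn fun i : Fin (r + g) =>
          ExteriorAlgebra.ι R (Fin.append rel lf i)).prod
        = (List.ofFn fun i => ExteriorAlgebra.ι R (rel i)).prod *
          (List.ofFn fun i => ExteriorAlgebra.ι R (lf i)).prod := by
      rw [List.ofFn_add (f := fun i : Fin (r + g) => ExteriorAlgebra.ι R (Fin.append rel lf i)),
        List.prod_append]
      have e1 : (fun i : Fin r =>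
            ExteriorAlgebra.ι R (Fin.append rel lf (Fin.castLE (Nat.le_add_right r g) i)))
          = fun i : Fin r => ExteriorAlgebra.ι R (rel i) := by
        funext i; rw [show Fin.castLE (Nat.le_add_right r g) i = Fin.castAdd g i from rfl,
          Fin.append_left]
      have e2 : (fun i : Fin g =>
            ExteriorAlgebra.ι R (Fin.append rel lf (Fin.natAdd r i)))
          = fun i : Fin g => ExteriorAlgebra.ι R (lf i) := by
        funext i; rw [Fin.append_right]
      rw [e1, e2]
    rw [← h2] at h1
    rw [phi_ofFn hnrg.symm, phi_ofFn rfl] at h1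
    have h3 : (Matrix.of fun (i : Fin (g+r)) j =>
        Pi.single ((finCongr (rfl : g + r = g + r).symm) i) (1 : R) j)
        = (1 : Matrix (Fin (g+r)) (Fin (g+r)) R) := by
      ext i j
      simp [Pi.single_apply, Matrix.one_apply, eq_comm]
    rw [h3, Matrix.det_one, smul_eq_mul, mul_one] at h1
    rw [← h1, hStk]
  -- determinant of stacked matrix with combined rows
  have blockdet : ∀ (B : Matrix (Fin g) (Fin g) R) (x : Fin g → (Fin (g + r) → R)),
      (Stk (fun i => ∑ j, B i j • x j)).det = B.det * (Stk x).det := by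
    intro B x
    set ρ : Fin r ⊕ Fin g ≃ Fin (g + r) := finSumFinEquiv.trans (finCongr hnrg.symm) with hρ
    have hρl : ∀ i : Fin r, finCongr hnrg (ρ (Sum.inl i)) = Fin.castAdd g i := by
      intro i; simp [hρ]
    have hρr : ∀ j : Fin g, finCongr hnrg (ρ (Sum.inr j)) = Fin.natAdd r j := by
      intro j; simp [hρ]
    have hsub : ∀ x' : Fin g → (Fin (g + r) → R), ((Stk x').submatrix ρ ρ)
        = Matrix.of (fun s t => Sum.elim rel x' s (ρ t)) := by
      intro x'
      ext s t
      rw [Matrix.submatrix_apply, hStk]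
      cases s with
      | inl i =>
          show Fin.append rel x' (finCongr hnrg (ρ (Sum.inl i))) (ρ t) = rel i (ρ t)
          rw [hρl, Fin.append_left]
      | inr j =>
          show Fin.append rel x' (finCongr hnrg (ρ (Sum.inr j))) (ρ t) = x' j (ρ t)
          rw [hρr, Fin.append_right]
    have hmul : (Matrix.of (fun s t => Sum.elim rel (fun i => ∑ j, B i j • x j) s (ρ t)))
        = (Matrix.fromBlocks 1 0 0 B) * (Matrix.of (fun s t => Sum.elim rel x s (ρ t))) := by
      ext s t
      cases s with
      | inl i =>
          rw [Matrix.mul_apply]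
          rw [Fintype.sum_sum_type]
          simp [Matrix.fromBlocks, Matrix.one_apply, ite_mul]
      | inr j =>
          rw [Matrix.mul_apply]
          rw [Fintype.sum_sum_type]
          simp [Matrix.fromBlocks, Finset.sum_apply, Pi.smul_apply, smul_eq_mul]
    calc (Stk (fun i => ∑ j, B i j • x j)).det
        = ((Stk (fun i => ∑ j, B i j • x j)).submatrix ρ ρ).det :=
          (Matrix.det_submatrix_equiv_self ρ _).symm
      _ = ((Matrix.fromBlocks 1 0 0 B) * (Matrix.of (fun s t => Sum.elim rel x s (ρ t)))).det := by
          rw [hsub, hmul]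
      _ = B.det * ((Stk x).submatrix ρ ρ).det := by
          rw [Matrix.det_mul, Matrix.det_fromBlocks_zero₂₁, Matrix.det_one, one_mul, hsub]
      _ = B.det * (Stk x).det := by rw [Matrix.det_submatrix_equiv_self ρ]
  -- the second presentation: of H/⟨w⟩
  set W : Submodule R H := Submodule.span R (Set.range w) with hW
  set q0 : (Fin (g + r) → R) →ₗ[R] (H ⧸ W) := W.mkQ ∘ₗ pr with hq0
  have hq0surj : Function.Surjective q0 := by
    rw [hq0]
    exact (Submodule.mkQ_surjective W).comp (fun x => ⟨lift x, hlift x⟩)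
  set P₀ : Fin (g + r) → (Fin (g + r) → R) :=
    fun i => Fin.append rel ℓw (finCongr hnrg i) with hP₀
  have hrowsP₀ : ∀ i, (Stk ℓw) i = P₀ i := fun i => rfl
  have hq0rel : ∀ i : Fin r, q0 (rel i) = 0 := by
    intro i
    have : rel i ∈ LinearMap.ker pr := by
      rw [hker]; exact Submodule.subset_span ⟨i, rfl⟩
    rw [hq0]
    simp [LinearMap.mem_ker.mp this]
  have hq0ℓw : ∀ i : Fin g, q0 (ℓw i) = 0 := by
    intro i
    rw [hq0]
    have : pr (ℓw i) = w i := hlift (w i)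
    simp only [LinearMap.coe_comp, Function.comp_apply, this]
    rw [Submodule.mkQ_apply, Submodule.Quotient.mk_eq_zero]
    exact Submodule.subset_span ⟨i, rfl⟩
  have hq0P₀ : ∀ i, q0 (P₀ i) = 0 := by
    intro i
    rw [hP₀]
    refine Fin.addCases (motive := fun a => q0 (Fin.append rel ℓw a) = 0) ?_ ?_ (finCongr hnrg i)
    · intro i'; rw [Fin.append_left]; exact hq0rel i'
    · intro j'; rw [Fin.append_right]; exact hq0ℓw j'
  have hker0 : LinearMap.ker q0 = Submodule.span R (Set.range P₀) := by
    apply le_antisymm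
    · intro x hx
      have hprx : pr x ∈ W := by
        rw [hq0] at hx
        simpa [Submodule.Quotient.mk_eq_zero] using LinearMap.mem_ker.mp hx
      have hwim : W ≤ Submodule.map pr (Submodule.span R (Set.range ℓw)) := by
        rw [hW, Submodule.map_span]
        apply Submodule.span_mono
        rintro _ ⟨i, rfl⟩
        exact ⟨ℓw i, Set.mem_range_self i, hlift (w i)⟩
      obtain ⟨z, hz, hzx⟩ := hwim hprx
      have hxz : x - z ∈ LinearMap.ker pr := by
        rw [LinearMap.mem_ker, map_sub, hzx, sub_self]
      rw [hker] at hxz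
      have hsub : Set.range rel ∪ Set.range ℓw ⊆ Set.range P₀ := by
        rintro p (⟨i, rfl⟩ | ⟨j, rfl⟩)
        · refine ⟨(finCongr hnrg).symm (Fin.castAdd g i), ?_⟩
          rw [hP₀]
          show Fin.append rel ℓw (finCongr hnrg (finCongr hnrg.symm (Fin.castAdd g i))) = rel i
          rw [show finCongr hnrg (finCongr hnrg.symm (Fin.castAdd g i)) = Fin.castAdd g i from
            Fin.ext rfl, Fin.append_left]
        · refine ⟨(finCongr hnrg).symm (Fin.natAdd r j), ?_⟩
          rw [hP₀]
          show Fin.append rel ℓw (finCongr hnrg (finCongr hnrg.symm (Fin.natAdd r j))) = ℓw j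
          rw [show finCongr hnrg (finCongr hnrg.symm (Fin.natAdd r j)) = Fin.natAdd r j from
            Fin.ext rfl, Fin.append_right]
      have : x = (x - z) + z := by ring_nf
      rw [this]
      refine Submodule.add_mem _ ?_ ?_
      · exact Submodule.span_mono (Set.subset_union_left.trans hsub) hxz
      · exact Submodule.span_mono (Set.subset_union_right.trans hsub) hz
    · rw [Submodule.span_le]
      rintro _ ⟨i, rfl⟩
      exact LinearMap.mem_ker.mpr (hq0P₀ i)
  -- D := the determinant of the stacked matrix for w
  set D : R := (Stk ℓw).det with hD
  have hDmin : ∀ s : Fin (g + r) → Fin (g + r),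
      D ∣ (Matrix.of fun i j => P₀ (s i) j).det := by
    intro s
    by_cases hinj : Function.Injective s
    · have hbij : Function.Bijective s := Finite.injective_iff_bijective.mp hinj
      set σ : Equiv.Perm (Fin (g + r)) := Equiv.ofBijective s hbij with hσ
      have : (Matrix.of fun i j => P₀ (s i) j) = (Stk ℓw).submatrix σ id := by
        funext i j
        rw [hσ]
        show P₀ (s i) j = Stk ℓw (Equiv.ofBijective s hbij i) j
        rw [Equiv.ofBijective_apply, hrowsP₀]
      rw [this, Matrix.det_permute]
      exact Dvd.dvd.mul_left dvd_rfl _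
    · rw [Function.not_injective_iff] at hinj
      obtain ⟨i, j, hij, hne⟩ := hinj
      have : (Matrix.of fun i j => P₀ (s i) j).det = 0 := by
        apply Matrix.det_zero_of_row_eq hne
        show (fun j' => P₀ (s i) j') = fun j' => P₀ (s j) j'
        rw [hij]
      rw [this]
      exact dvd_zero D
  -- unpack the given presentation
  obtain ⟨m, k, qA, P, hqAsurj, hkerA, hΔ1, hΔ2⟩ := hΔ
  have hCDA : DvdKerDet qA Δ :=
    dvdKerDet_of_span qA P hkerA (fun s => hΔ1 _ ⟨s, rfl⟩)
  have hCD0 : DvdKerDet q0 D := dvdKerDet_of_span q0 P₀ hker0 hDmin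
  have hiff := fun e => dvdKerDet_iff_of_surjective qA hqAsurj q0 hq0surj e
  have hΔD : Δ ∣ D := by
    have h1 : DvdKerDet q0 Δ := (hiff Δ).mp hCDA
    have h2 := h1 (Stk ℓw) (fun i => by rw [hrowsP₀]; exact hq0P₀ i)
    rwa [← hD] at h2
  have hDΔ : D ∣ Δ := by
    have h1 : DvdKerDet qA D := (hiff D).mpr hCD0
    refine hΔ2 D (fun c hc => ?_)
    obtain ⟨s, rfl⟩ := hc
    refine h1 _ (fun i => ?_)
    have : P (s i) ∈ LinearMap.ker qA := by
      rw [hkerA]; exact Submodule.subset_span ⟨s i, rfl⟩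
    exact LinearMap.mem_ker.mp this
  obtain ⟨uu, huu⟩ := associated_of_dvd_dvd hΔD hDΔ
  refine ⟨uu, ?_⟩
  intro y M hyM
  -- clear denominators of M
  obtain ⟨d, hd⟩ := IsLocalization.exist_integer_multiples_of_finite (nonZeroDivisors R)
    (fun p : Fin g × Fin g => M p.1 p.2)
  have hd' : ∀ i j : Fin g, ∃ c : R, algebraMap R Q c = (d : R) • M i j := by
    intro i j; exact hd (i, j)
  choose nn hnn using hd'
  -- the canonical map H → Q ⊗ H is a localization map
  set tm : H →ₗ[R] Q ⊗[R] H := TensorProduct.mk R Q H 1 with htm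
  haveI hlocmod : IsLocalizedModule (nonZeroDivisors R) tm :=
    (isLocalizedModule_iff_isBaseChange (nonZeroDivisors R) Q tm).mpr
      (TensorProduct.isBaseChange R H Q)
  have htors : ∀ i : Fin g, ∃ cc : nonZeroDivisors R,
      (cc : R) • ((d : R) • y i - ∑ j, nn i j • w j) = 0 := by
    intro i
    suffices hzero : tm ((d : R) • y i - ∑ j, nn i j • w j) = 0 by
      obtain ⟨cc, hcc⟩ := (IsLocalizedModule.eq_zero_iff (nonZeroDivisors R) tm).mp hzero
      exact ⟨cc, hcc⟩
    have e0 : tm ((d : R) • y i - ∑ j, nn i j • w j)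
        = (d : R) • ((1 : Q) ⊗ₜ[R] y i) - ∑ j, nn i j • ((1 : Q) ⊗ₜ[R] w j) := by
      rw [map_sub, map_smul, map_sum]
      have e00 : ∀ j : Fin g, tm (nn i j • w j) = nn i j • ((1 : Q) ⊗ₜ[R] w j) := by
        intro j; rw [map_smul]; rfl
      rw [Finset.sum_congr rfl (fun j _ => e00 j)]
      rfl
    rw [e0, hyM i]
    have e1 : (d : R) • ∑ j, M i j • ((1 : Q) ⊗ₜ[R] w j)
        = ∑ j, ((d : R) • M i j) • ((1 : Q) ⊗ₜ[R] w j) := by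
      rw [Finset.smul_sum]
      refine Finset.sum_congr rfl (fun j _ => ?_)
      rw [← smul_assoc]
    have e2 : ∀ j, nn i j • ((1 : Q) ⊗ₜ[R] w j)
        = ((d : R) • M i j) • ((1 : Q) ⊗ₜ[R] w j) := by
      intro j
      rw [← hnn i j, algebraMap_smul]
    rw [e1, Finset.sum_congr rfl (fun j _ => e2 j), sub_self]
  choose c hc using htors
  -- the two lifts of the family (c i * d) • y i
  set yl : Fin g → (Fin (g + r) → R) := fun i => lift (y i) with hyl
  have hAy : Alex y = (Stk yl).det := key y yl (fun i => hlift (y i))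
  set u1 : Fin g → H := fun i => ((c i : R) * (d : R)) • y i with hu1
  have hl1 : ∀ i, pr ((((c i : R) * (d : R))) • yl i) = u1 i := by
    intro i; rw [map_smul, hyl]; simp [hlift, hu1]
  have keyA : Alex u1 = (Stk (fun i => ((c i : R) * (d : R)) • yl i)).det :=
    key u1 _ hl1
  have hdiag : (fun i => ((c i : R) * (d : R)) • yl i)
      = fun i => ∑ j, (Matrix.diagonal (fun i => (c i : R) * (d : R))) i j • yl j := by
    funext i
    rw [Finset.sum_eq_single i]
    · rw [Matrix.diagonal_apply_eq]
    · intro b _ hb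
      rw [Matrix.diagonal_apply_ne' _ hb, zero_smul]
    · intro hni; exact absurd (Finset.mem_univ i) hni
  have keyA2 : Alex u1 = (∏ i, ((c i : R) * (d : R))) * (Stk yl).det := by
    rw [keyA, hdiag, blockdet, Matrix.det_diagonal]
  -- second expression for u1
  have hu1w : ∀ i, u1 i = ∑ j, ((c i : R) * nn i j) • w j := by
    intro i
    have h5 := hc i
    rw [smul_sub, sub_eq_zero] at h5
    rw [hu1]
    show ((c i : R) * (d : R)) • y i = _
    rw [← smul_smul, h5, Finset.smul_sum]
    refine Finset.sum_congr rfl (fun j _ => ?_)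
    rw [smul_smul]
  set lift2 : Fin g → (Fin (g + r) → R) := fun i => ∑ j, ((c i : R) * nn i j) • ℓw j with hlift2
  have hl2 : ∀ i, pr (lift2 i) = u1 i := by
    intro i
    rw [hlift2]
    show pr (∑ j, ((c i : R) * nn i j) • ℓw j) = u1 i
    rw [map_sum, hu1w]
    refine Finset.sum_congr rfl (fun j _ => ?_)
    rw [map_smul, hℓw]
    simp [hlift]
  have keyB : Alex u1 = (Matrix.of fun i j => (c i : R) * nn i j).det * (Stk ℓw).det := by
    have := key u1 lift2 hl2
    rw [this, hlift2]
    exact blockdet (Matrix.of fun i j => (c i : R) * nn i j) ℓw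
  -- the matrix of nn
  set nnM : Matrix (Fin g) (Fin g) R := Matrix.of fun i j => nn i j with hnnM
  have hBdet : (Matrix.of fun i j => (c i : R) * nn i j).det
      = (∏ i, (c i : R)) * nnM.det := by
    have : (Matrix.of fun i j => (c i : R) * nn i j)
        = Matrix.diagonal (fun i => (c i : R)) * nnM := by
      ext i j
      rw [Matrix.diagonal_mul]
      rfl
    rw [this, Matrix.det_mul, Matrix.det_diagonal]
  -- cancel the torsion factors
  have hcne : (∏ i, (c i : R)) ≠ 0 := by
    rw [Finset.prod_ne_zero_iff]
    intro i _
    exact nonZeroDivisors.ne_zero (c i).2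
  have hmain : (d : R) ^ g * (Stk yl).det = nnM.det * (Stk ℓw).det := by
    have h6 : (∏ i, ((c i : R) * (d : R))) * (Stk yl).det
        = (∏ i, (c i : R)) * (nnM.det * (Stk ℓw).det) := by
      rw [← keyA2, keyB, hBdet]; ring
    rw [Finset.prod_mul_distrib, Finset.prod_const, Finset.card_univ, Fintype.card_fin] at h6
    apply mul_left_cancel₀ hcne
    calc (∏ i, (c i : R)) * ((d : R) ^ g * (Stk yl).det)
        = (∏ i, (c i : R)) * (d : R) ^ g * (Stk yl).det := by ring
      _ = (∏ i, (c i : R)) * (nnM.det * (Stk ℓw).det) := h6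
  -- push to Q
  have hQ := congrArg (algebraMap R Q) hmain
  rw [map_mul, map_mul, map_pow] at hQ
  have hnnQ : algebraMap R Q nnM.det = algebraMap R Q (d : R) ^ g * M.det := by
    rw [RingHom.map_det, RingHom.mapMatrix_apply]
    have : nnM.map (algebraMap R Q) = algebraMap R Q (d : R) • M := by
      ext i j
      rw [Matrix.map_apply, Matrix.smul_apply, hnnM]
      show algebraMap R Q (nn i j) = _
      rw [hnn i j, Algebra.smul_def, smul_eq_mul]
    rw [this, Matrix.det_smul, Fintype.card_fin]
  have hDQ : algebraMap R Q ((Stk ℓw).det) = algebraMap R Q ((uu : R) * Δ) := by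
    rw [← hD, ← huu, mul_comm]
  rw [hnnQ, hDQ, ← hAy] at hQ
  have hdQ : algebraMap R Q (d : R) ^ g ≠ 0 := by
    apply pow_ne_zero
    rw [Ne, map_eq_zero_iff _ (IsFractionRing.injective R Q)]
    exact nonZeroDivisors.ne_zero d.2
  apply mul_left_cancel₀ hdQ
  calc algebraMap R Q (d : R) ^ g * algebraMap R Q (Alex y) = _ := hQ
    _ = algebraMap R Q (d : R) ^ g * (algebraMap R Q ((uu : R) * Δ) * M.det) := by ring


/-- computation of the Alexander function.  If `H` has a presentation of
deficiency `g`, `dim_Q(Q ⊗ H) = g` and `w₁, …, w_g ∈ H` generate `Q ⊗ H`, then for all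
`y₁, …, y_g ∈ H`, up to a unit, `𝒜(y₁ ∧ … ∧ y_g) = ord(H/⟨w⟩) · det(M)` where `M`
expresses the images of the `yᵢ` in the basis `w` of `Q ⊗ H`. -/
theorem stmt14 (R : Type) [CommRing R] [IsDomain R] [IsNoetherianRing R]
    [UniqueFactorizationMonoid R]
    (Q : Type) [Field Q] [Algebra R Q] [IsFractionRing R Q]
    (H : Type) [AddCommGroup H] [Module R H] [Module.Finite R H]
    (g r : ℕ)
    -- a presentation `⟨γ₁,…,γ_{g+r} | rel₁,…,rel_r⟩` of `H` of deficiency `g`: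
    (pr : (Fin (g + r) → R) →ₗ[R] H) (hpr : Function.Surjective pr)
    (rel : Fin r → (Fin (g + r) → R))
    (hker : LinearMap.ker pr = Submodule.span R (Set.range rel))
    -- the Alexander function `𝒜 : Λ^g H → R` of this presentation:
    (Alex : (Fin g → H) → R)
    (hAlex : ∀ (u : Fin g → H) (lift : Fin g → (Fin (g + r) → R)),
      (∀ i, pr (lift i) = u i) →
      (List.ofFn fun i => ExteriorAlgebra.ι R (rel i)).prod *
          (List.ofFn fun i => ExteriorAlgebra.ι R (lift i)).prod =
        Alex u • (List.ofFn fun i : Fin (g + r) =>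
          ExteriorAlgebra.ι R (Pi.single i (1 : R))).prod)
    -- `dim_Q (Q ⊗_R H) = g`:
    (hdim : Module.finrank Q (Q ⊗[R] H) = g)
    -- `w₁, …, w_g` generate `Q ⊗_R H` over `Q`:
    (w : Fin g → H)
    (hw : Submodule.span Q (Set.range fun i => (1 : Q) ⊗ₜ[R] w i) = ⊤)
    -- `Δ` is the order of `H / ⟨w₁, …, w_g⟩`:
    (Δ : R) (hΔ : IsOrderOf R (H ⧸ Submodule.span R (Set.range w)) Δ) :
    ∃ u : Rˣ, ∀ (y : Fin g → H) (M : Matrix (Fin g) (Fin g) Q),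
      (∀ i, (1 : Q) ⊗ₜ[R] y i = ∑ j, M i j • ((1 : Q) ⊗ₜ[R] w j)) →
      algebraMap R Q (Alex y) = algebraMap R Q ((u : R) * Δ) * M.det :=
  stmt14' R Q H g r pr hpr rel hker Alex hAlex hdim w hw Δ hΔ
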